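/- Let χ be a symmetric {0,1}-valued function on pairs of distinct natural numbers with the extension property, and let c_random and c_max be the associated colorings. Then: (a) every almost node-coloring c on a subset A ⊆ ℕ^ℕ satisfies c ≤ c_random, via an embedding e : A → ℕ^ℕ with Δ(e(x),e(y)) = Δ(x,y) for all distinct x,y ∈ A; (b) every almost node-coloring c on a compact subset A ⊆ ℕ^ℕ satisfies c ≤ c_max. -/

import Mathlib

open Cardinal Topology

/-- The least index where two sequences differ. -/
noncomputable def Delta {α : Type*} (x y : ℕ → α) : ℕ := sInf {n | x n ≠ y n}

/-- A set is homogeneous for a pair-coloring `c` if `c` is constant on pairs of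
distinct elements of the set. -/
def IsHomog {X : Type*} (c : X → X → Fin 2) (H : Set X) : Prop :=
  ∃ i : Fin 2, ∀ x ∈ H, ∀ y ∈ H, x ≠ y → c x y = i

/-- The homogeneity number of a pair-coloring: the least cardinality of a family of
homogeneous sets covering the space. -/
noncomputable def hm {X : Type*} (c : X → X → Fin 2) : Cardinal :=
  sInf { κ | ∃ F : Set (Set X), #F = κ ∧ (∀ H ∈ F, IsHomog c H) ∧ ⋃₀ F = Set.univ }

/-- The homogeneity number of the restriction of a coloring to a subset. -/
noncomputable def hmOn {X : Type*} (c : X → X → Fin 2) (Y : Set X) : Cardinal :=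
  sInf { κ | ∃ F : Set (Set X), #F = κ ∧ (∀ H ∈ F, H ⊆ Y ∧ IsHomog c H) ∧ ⋃₀ F = Y }

/-- A pair-coloring is continuous if it is continuous on `X × X` minus the diagonal. -/
def ContColoring {X : Type*} [TopologicalSpace X] (c : X → X → Fin 2) : Prop :=
  Continuous fun p : {q : X × X // q.1 ≠ q.2} => c p.val.1 p.val.2

/-- Symmetry of a pair-coloring on distinct points. -/
def SymmColoring {X : Type*} (c : X → X → Fin 2) : Prop :=
  ∀ x y : X, x ≠ y → c x y = c y x

/-- A continuous pair-coloring is reduced if no nonempty open set is homogeneous. -/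
def Reduced {X : Type*} [TopologicalSpace X] (c : X → X → Fin 2) : Prop :=
  ContColoring c ∧ ∀ U : Set X, IsOpen U → U.Nonempty → ¬ IsHomog c U

/-- The coloring `c_min` on the Cantor space: the parity of the first difference. -/
noncomputable def cmin : (ℕ → Bool) → (ℕ → Bool) → Fin 2 :=
  fun x y => if Even (Delta x y) then 0 else 1

/-- The coloring `c_parity` on the Baire space: the parity of the first difference. -/
noncomputable def cparity : (ℕ → ℕ) → (ℕ → ℕ) → Fin 2 :=
  fun x y => if Even (Delta x y) then 0 else 1

/-- A pair-coloring on a subset `A` of the Baire space is an almost node-coloring if the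
color of a pair `{x, y}` depends only on the restrictions of `x` and `y` to
`Δ(x, y) + 1`. -/
def AlmostNodeColoring (A : Set (ℕ → ℕ)) (d : (ℕ → ℕ) → (ℕ → ℕ) → Fin 2) : Prop :=
  ∀ x ∈ A, ∀ y ∈ A, ∀ x' ∈ A, ∀ y' ∈ A, x ≠ y → x' ≠ y' →
    (∀ i ≤ Delta x y, x i = x' i ∧ y i = y' i) → d x y = d x' y'

/-- The extension property of the (edge-coloring of the) random graph. -/
def ExtensionProperty (χ : ℕ → ℕ → Fin 2) : Prop :=
  ∀ A B : Finset ℕ, Disjoint A B →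
    ∃ n : ℕ, n ∉ A ∧ n ∉ B ∧ (∀ a ∈ A, χ n a = 1) ∧ (∀ b ∈ B, χ n b = 0)

/-- The coloring `c_random` associated to `χ`: the `χ`-color of the pair of values at
the first difference. -/
noncomputable def crandom (χ : ℕ → ℕ → Fin 2) : (ℕ → ℕ) → (ℕ → ℕ) → Fin 2 :=
  fun x y => χ (x (Delta x y)) (y (Delta x y))

-- Delta lemmas
lemma delta_apply_ne {α : Type*} {x y : ℕ → α} (h : x ≠ y) :
    x (Delta x y) ≠ y (Delta x y) :=
  Nat.sInf_mem (Function.ne_iff.1 h)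

lemma eq_of_lt_delta {α : Type*} {x y : ℕ → α} {i : ℕ} (h : i < Delta x y) : x i = y i := by
  by_contra hc
  exact absurd (Nat.sInf_le hc) (not_le.2 h)

lemma delta_eq {α : Type*} {x y : ℕ → α} {n : ℕ} (hlow : ∀ i < n, x i = y i)
    (hn : x n ≠ y n) : Delta x y = n := by
  have hne : x ≠ y := fun he => hn (congrFun he n)
  refine le_antisymm (Nat.sInf_le hn) ?_
  by_contra hc
  exact delta_apply_ne hne (hlow _ (not_le.1 hc))

lemma fin2cases (t : Fin 2) : t = 0 ∨ t = 1 := by fin_cases t <;> simp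

-- witnesses
def Wit (A : Set (ℕ → ℕ)) (n : ℕ) (p : Fin n → ℕ) (a : ℕ) (x : ℕ → ℕ) : Prop :=
  x ∈ A ∧ (∀ i : Fin n, x i = p i) ∧ x n = a

lemma wit_ne {A : Set (ℕ → ℕ)} {n : ℕ} {p : Fin n → ℕ} {a b : ℕ} {x y : ℕ → ℕ}
    (hx : Wit A n p a x) (hy : Wit A n p b y) (hab : a ≠ b) : x ≠ y := by
  intro he
  exact hab (by rw [← hx.2.2, he, hy.2.2])

lemma wit_delta {A : Set (ℕ → ℕ)} {n : ℕ} {p : Fin n → ℕ} {a b : ℕ} {x y : ℕ → ℕ}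
    (hx : Wit A n p a x) (hy : Wit A n p b y) (hab : a ≠ b) : Delta x y = n := by
  refine delta_eq (fun i hi => ?_) ?_
  · rw [hx.2.1 ⟨i, hi⟩, hy.2.1 ⟨i, hi⟩]
  · rw [hx.2.2, hy.2.2]; exact hab

open Classical in
noncomputable def TGT (A : Set (ℕ → ℕ)) (c : (ℕ → ℕ) → (ℕ → ℕ) → Fin 2)
    (n : ℕ) (p : Fin n → ℕ) (a b : ℕ) : Fin 2 :=
  if h : ∃ x y : ℕ → ℕ, Wit A n p a x ∧ Wit A n p b y then
    c h.choose h.choose_spec.choose else 0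

lemma TGT_eq {A : Set (ℕ → ℕ)} {c : (ℕ → ℕ) → (ℕ → ℕ) → Fin 2}
    (hanc : AlmostNodeColoring A c) {n : ℕ} {p : Fin n → ℕ} {a b : ℕ} {x y : ℕ → ℕ}
    (hab : a ≠ b) (hx : Wit A n p a x) (hy : Wit A n p b y) :
    TGT A c n p a b = c x y := by
  have hex : ∃ x y : ℕ → ℕ, Wit A n p a x ∧ Wit A n p b y := ⟨x, y, hx, hy⟩
  rw [TGT, dif_pos hex]
  obtain ⟨hx0, hy0⟩ := hex.choose_spec.choose_spec
  set x0 := hex.choose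
  set y0 := hex.choose_spec.choose
  have hΔ : Delta x0 y0 = n := wit_delta hx0 hy0 hab
  refine hanc x0 hx0.1 y0 hy0.1 x hx.1 y hy.1 (wit_ne hx0 hy0 hab) (wit_ne hx hy hab) ?_
  intro i hi
  rw [hΔ] at hi
  rcases lt_or_eq_of_le hi with hi | rfl
  · exact ⟨by rw [hx0.2.1 ⟨i, hi⟩, hx.2.1 ⟨i, hi⟩], by rw [hy0.2.1 ⟨i, hi⟩, hy.2.1 ⟨i, hi⟩]⟩
  · exact ⟨by rw [hx0.2.2, hx.2.2], by rw [hy0.2.2, hy.2.2]⟩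

lemma TGT_symm {A : Set (ℕ → ℕ)} {c : (ℕ → ℕ) → (ℕ → ℕ) → Fin 2}
    (hsym : ∀ x ∈ A, ∀ y ∈ A, x ≠ y → c x y = c y x)
    (hanc : AlmostNodeColoring A c) {n : ℕ} {p : Fin n → ℕ} {a b : ℕ} (hab : a ≠ b) :
    TGT A c n p a b = TGT A c n p b a := by
  by_cases h : ∃ x y : ℕ → ℕ, Wit A n p a x ∧ Wit A n p b y
  · obtain ⟨x, y, hx, hy⟩ := h
    rw [TGT_eq hanc hab hx hy, TGT_eq hanc (Ne.symm hab) hy hx]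
    exact hsym x hx.1 y hy.1 (wit_ne hx hy hab)
  · have h' : ¬ ∃ y x : ℕ → ℕ, Wit A n p b y ∧ Wit A n p a x := by
      rintro ⟨y, x, hy, hx⟩; exact h ⟨x, y, hx, hy⟩
    rw [TGT, dif_neg h, TGT, dif_neg h']

-- construction of a copy of the random graph realizing prescribed colors T
open Classical in
noncomputable def nextVal (χ : ℕ → ℕ → Fin 2) (hχ : ExtensionProperty χ)
    (t : ℕ → Fin 2) (k : ℕ) (prev : ℕ → ℕ) : ℕ :=
  if h : Disjoint (((Finset.range k).filter (fun j => t j = 1)).image prev)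
      (((Finset.range k).filter (fun j => t j = 0)).image prev) then
    (hχ _ _ h).choose else 0

noncomputable def SEQ (χ : ℕ → ℕ → Fin 2) (hχ : ExtensionProperty χ)
    (T : ℕ → ℕ → Fin 2) : ℕ → ℕ → ℕ
  | 0 => fun _ => 0
  | k + 1 => Function.update (SEQ χ hχ T k) k (nextVal χ hχ (T k) k (SEQ χ hχ T k))

noncomputable def FF (χ : ℕ → ℕ → Fin 2) (hχ : ExtensionProperty χ)
    (T : ℕ → ℕ → Fin 2) (k : ℕ) : ℕ :=
  SEQ χ hχ T (k + 1) k

lemma SEQ_eq (χ : ℕ → ℕ → Fin 2) (hχ : ExtensionProperty χ) (T : ℕ → ℕ → Fin 2) :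
    ∀ m k, k < m → SEQ χ hχ T m k = FF χ hχ T k := by
  intro m
  induction m with
  | zero => omega
  | succ m ih =>
    intro k hk
    rcases Nat.lt_succ_iff_lt_or_eq.1 hk with hk | rfl
    · rw [SEQ, Function.update_of_ne (by omega), ih k hk]
    · rfl

lemma FF_key (χ : ℕ → ℕ → Fin 2) (hχ : ExtensionProperty χ) (T : ℕ → ℕ → Fin 2) :
    ∀ k, ∀ j < k, FF χ hχ T k ≠ FF χ hχ T j ∧ χ (FF χ hχ T k) (FF χ hχ T j) = T k j := by
  intro k
  induction k using Nat.strong_induction_on with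
  | _ k IH =>
  have hinj : ∀ i < k, ∀ j < k, FF χ hχ T i = FF χ hχ T j → i = j := by
    intro i hi j hj he
    rcases lt_trichotomy i j with h | h | h
    · exact absurd he.symm ((IH j hj) i h).1
    · exact h
    · exact absurd he ((IH i hi) j h).1
  have hprev : ∀ j < k, SEQ χ hχ T k j = FF χ hχ T j := fun j h => SEQ_eq χ hχ T k j h
  have hdisj : Disjoint
      (((Finset.range k).filter (fun j => T k j = 1)).image (SEQ χ hχ T k))
      (((Finset.range k).filter (fun j => T k j = 0)).image (SEQ χ hχ T k)) := by
    rw [Finset.disjoint_left]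
    rintro a ha hb
    obtain ⟨j1, hj1, rfl⟩ := Finset.mem_image.1 ha
    obtain ⟨j2, hj2, he⟩ := Finset.mem_image.1 hb
    rw [Finset.mem_filter, Finset.mem_range] at hj1 hj2
    rw [hprev j2 hj2.1, hprev j1 hj1.1] at he
    have := hinj j2 hj2.1 j1 hj1.1 he
    rw [this, hj1.2] at hj2
    exact absurd hj2.2 (by simp)
  have hspec := (hχ _ _ hdisj).choose_spec
  have hFFk : FF χ hχ T k = (hχ _ _ hdisj).choose := by
    show SEQ χ hχ T (k + 1) k = _
    rw [SEQ, Function.update_self, nextVal, dif_pos hdisj]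
  intro j hj
  have hmem1 : T k j = 1 → FF χ hχ T j ∈
      ((Finset.range k).filter (fun j => T k j = 1)).image (SEQ χ hχ T k) := fun h1 =>
    Finset.mem_image.2 ⟨j, Finset.mem_filter.2 ⟨Finset.mem_range.2 hj, h1⟩, hprev j hj⟩
  have hmem0 : T k j = 0 → FF χ hχ T j ∈
      ((Finset.range k).filter (fun j => T k j = 0)).image (SEQ χ hχ T k) := fun h0 =>
    Finset.mem_image.2 ⟨j, Finset.mem_filter.2 ⟨Finset.mem_range.2 hj, h0⟩, hprev j hj⟩
  rcases fin2cases (T k j) with h0 | h1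
  · refine ⟨?_, ?_⟩
    · rw [hFFk]; intro he; exact hspec.2.1 (he ▸ hmem0 h0)
    · rw [hFFk, h0]; exact hspec.2.2.2 _ (hmem0 h0)
  · refine ⟨?_, ?_⟩
    · rw [hFFk]; intro he; exact hspec.1 (he ▸ hmem1 h1)
    · rw [hFFk, h1]; exact hspec.2.2.1 _ (hmem1 h1)

lemma FF_inj (χ : ℕ → ℕ → Fin 2) (hχ : ExtensionProperty χ) (T : ℕ → ℕ → Fin 2) :
    Function.Injective (FF χ hχ T) := by
  intro i j he
  rcases lt_trichotomy i j with h | h | h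
  · exact absurd he.symm (FF_key χ hχ T j i h).1
  · exact h
  · exact absurd he (FF_key χ hχ T i j h).1

lemma FF_chi (χ : ℕ → ℕ → Fin 2) (hχsym : ∀ m n : ℕ, m ≠ n → χ m n = χ n m)
    (hχ : ExtensionProperty χ) (T : ℕ → ℕ → Fin 2)
    (Tsym : ∀ j k, j ≠ k → T k j = T j k) {k j : ℕ} (hjk : j ≠ k) :
    χ (FF χ hχ T k) (FF χ hχ T j) = T k j := by
  rcases lt_trichotomy j k with h | h | h
  · exact (FF_key χ hχ T k j h).2
  · exact absurd h hjk
  · rw [hχsym _ _ ((FF_inj χ hχ T).ne (Ne.symm hjk)), (FF_key χ hχ T j k h).2, Tsym j k hjk]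

-- the node labelling
noncomputable def Gdef (χ : ℕ → ℕ → Fin 2) (hχ : ExtensionProperty χ)
    (A : Set (ℕ → ℕ)) (c : (ℕ → ℕ) → (ℕ → ℕ) → Fin 2)
    (n : ℕ) (p : Fin n → ℕ) (a : ℕ) : ℕ :=
  FF χ hχ (TGT A c n p) a

lemma G_agree (χ : ℕ → ℕ → Fin 2) (hχ : ExtensionProperty χ)
    (A : Set (ℕ → ℕ)) (c : (ℕ → ℕ) → (ℕ → ℕ) → Fin 2) {x y : ℕ → ℕ} {m : ℕ}
    (hm : m < Delta x y) :
    Gdef χ hχ A c m (fun i => x i) (x m) = Gdef χ hχ A c m (fun i => y i) (y m) := by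
  have h1 : (fun i : Fin m => x i) = fun i : Fin m => y i :=
    funext fun i => eq_of_lt_delta (lt_trans i.2 hm)
  rw [h1, eq_of_lt_delta hm]

lemma G_ne (χ : ℕ → ℕ → Fin 2) (hχ : ExtensionProperty χ)
    (A : Set (ℕ → ℕ)) (c : (ℕ → ℕ) → (ℕ → ℕ) → Fin 2) {x y : ℕ → ℕ}
    (hxy : x ≠ y) :
    Gdef χ hχ A c (Delta x y) (fun i => x i) (x (Delta x y)) ≠
      Gdef χ hχ A c (Delta x y) (fun i => y i) (y (Delta x y)) := by
  have hpy : (fun i : Fin (Delta x y) => y i) = fun i : Fin (Delta x y) => x i :=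
    funext fun i => (eq_of_lt_delta i.2).symm
  rw [Gdef, Gdef, hpy]
  exact (FF_inj χ hχ _).ne (delta_apply_ne hxy)

lemma G_chi (χ : ℕ → ℕ → Fin 2) (hχsym : ∀ m n : ℕ, m ≠ n → χ m n = χ n m)
    (hχ : ExtensionProperty χ)
    (A : Set (ℕ → ℕ)) (c : (ℕ → ℕ) → (ℕ → ℕ) → Fin 2)
    (hcsym : ∀ x ∈ A, ∀ y ∈ A, x ≠ y → c x y = c y x)
    (hanc : AlmostNodeColoring A c) {x y : ℕ → ℕ}
    (hx : x ∈ A) (hy : y ∈ A) (hxy : x ≠ y) :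
    χ (Gdef χ hχ A c (Delta x y) (fun i => x i) (x (Delta x y)))
      (Gdef χ hχ A c (Delta x y) (fun i => y i) (y (Delta x y))) = c x y := by
  have hpy : (fun i : Fin (Delta x y) => y i) = fun i : Fin (Delta x y) => x i :=
    funext fun i => show y (i : ℕ) = x (i : ℕ) from (eq_of_lt_delta i.2).symm
  have hab : x (Delta x y) ≠ y (Delta x y) := delta_apply_ne hxy
  rw [Gdef, Gdef, hpy]
  rw [FF_chi χ hχsym hχ _ (fun a b hab' => TGT_symm hcsym hanc (Ne.symm hab')) (Ne.symm hab)]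
  exact TGT_eq hanc hab ⟨hx, fun i => rfl, rfl⟩ ⟨hy, fun i => (show x (i : ℕ) = y (i : ℕ) from eq_of_lt_delta i.2).symm, rfl⟩

-- the general embedding lemma
lemma embed_of_delta (A : Set (ℕ → ℕ)) (e : A → ℕ → ℕ) (L : ℕ → ℕ) (hL : StrictMono L)
    (hcont : Continuous e)
    (hlow : ∀ x y : A, (x : ℕ → ℕ) ≠ (y : ℕ → ℕ) →
      ∀ m < L (Delta (x : ℕ → ℕ) (y : ℕ → ℕ)), e x m = e y m)
    (hne : ∀ x y : A, (x : ℕ → ℕ) ≠ (y : ℕ → ℕ) →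
      e x (L (Delta (x : ℕ → ℕ) (y : ℕ → ℕ))) ≠ e y (L (Delta (x : ℕ → ℕ) (y : ℕ → ℕ)))) :
    IsEmbedding e := by
  refine ⟨isInducing_iff_nhds.2 fun a => le_antisymm (hcont.continuousAt.le_comap) ?_, ?_⟩
  · intro s hs
    rw [nhds_subtype] at hs
    obtain ⟨t, ht, hts⟩ := Filter.mem_comap.1 hs
    obtain ⟨u, ⟨z, n, rfl⟩, haz, hut⟩ :=
      (PiNat.isTopologicalBasis_cylinders (fun _ : ℕ => ℕ)).mem_nhds_iff.1 ht
    refine Filter.mem_comap.2 ⟨PiNat.cylinder (e a) (L n),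
      ((PiNat.isOpen_cylinder (fun _ : ℕ => ℕ) (e a) (L n)).mem_nhds (PiNat.self_mem_cylinder _ _)), ?_⟩
    intro y hy
    apply hts
    apply hut
    suffices hyA : ∀ i < n, (y : ℕ → ℕ) i = (a : ℕ → ℕ) i by
      intro i hi
      rw [hyA i hi]
      exact haz i hi
    by_cases hya : (y : ℕ → ℕ) = (a : ℕ → ℕ)
    · intro i _; rw [hya]
    · have h1 : ¬ L (Delta (y : ℕ → ℕ) (a : ℕ → ℕ)) < L n := fun hlt =>
        hne y a hya (hy _ hlt)
      have h2 : n ≤ Delta (y : ℕ → ℕ) (a : ℕ → ℕ) := by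
        by_contra hc
        exact h1 (hL (not_le.1 hc))
      intro i hi
      exact eq_of_lt_delta (lt_of_lt_of_le hi h2)
  · intro x y h
    by_contra hxy
    have hxy' : (x : ℕ → ℕ) ≠ (y : ℕ → ℕ) := fun h' => hxy (Subtype.ext h')
    exact hne x y hxy' (by rw [h])

lemma cont_coord (A : Set (ℕ → ℕ)) (m : ℕ) (H : (Fin m → ℕ) → ℕ → ℕ) :
    Continuous (fun x : A => H (fun i => x.1 i) (x.1 m)) := by
  have h : (fun x : A => H (fun i => x.1 i) (x.1 m)) =
      (fun q : (Fin m → ℕ) × ℕ => H q.1 q.2) ∘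
        (fun x : A => ((fun i : Fin m => x.1 i), x.1 m)) := rfl
  rw [h]
  refine continuous_of_discreteTopology.comp (Continuous.prodMk ?_ ?_)
  · exact continuous_pi fun i : Fin m =>
      ((continuous_apply ((i : ℕ))).comp continuous_subtype_val :
        Continuous fun x : A => x.1 (i : ℕ))
  · exact (continuous_apply m).comp continuous_subtype_val

open Classical in
noncomputable def PAD (G : ∀ n, (Fin n → ℕ) → ℕ → ℕ) (L : ℕ → ℕ) (x : ℕ → ℕ) (m : ℕ) : ℕ :=
  if h : ∃ k, L k = m then G h.choose (fun i => x i) (x h.choose) else 0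

lemma PAD_L {L : ℕ → ℕ} (hLinj : Function.Injective L) (G : ∀ n, (Fin n → ℕ) → ℕ → ℕ)
    (x : ℕ → ℕ) (k : ℕ) : PAD G L x (L k) = G k (fun i => x i) (x k) := by
  have h : ∃ j, L j = L k := ⟨k, rfl⟩
  rw [PAD, dif_pos h]
  have hk : h.choose = k := hLinj h.choose_spec
  rw [hk]


/-- `(a)` every almost node-coloring on a subset of the Baire space embeds into
`c_random` by a level-preserving embedding, and `(b)` every almost node-coloring on a
compact subset of the Baire space embeds into `c_max`, i.e., into `c_random` restricted
to `∏ₙ {0, …, n}`. -/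
theorem stmt7 (χ : ℕ → ℕ → Fin 2) (hχsym : ∀ m n : ℕ, m ≠ n → χ m n = χ n m)
    (hχ : ExtensionProperty χ) :
    (∀ (A : Set (ℕ → ℕ)) (c : (ℕ → ℕ) → (ℕ → ℕ) → Fin 2),
      (∀ x ∈ A, ∀ y ∈ A, x ≠ y → c x y = c y x) → AlmostNodeColoring A c →
      ∃ e : A → (ℕ → ℕ), IsEmbedding e ∧
        (∀ x y : A, (x : ℕ → ℕ) ≠ (y : ℕ → ℕ) →
          crandom χ (e x) (e y) = c x y ∧ Delta (e x) (e y) = Delta (x : ℕ → ℕ) y) ) ∧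
    (∀ (A : Set (ℕ → ℕ)) (c : (ℕ → ℕ) → (ℕ → ℕ) → Fin 2),
      IsCompact A → (∀ x ∈ A, ∀ y ∈ A, x ≠ y → c x y = c y x) → AlmostNodeColoring A c →
      ∃ e : A → (ℕ → ℕ), IsEmbedding e ∧ (∀ x : A, ∀ n : ℕ, e x n ≤ n) ∧
        (∀ x y : A, (x : ℕ → ℕ) ≠ (y : ℕ → ℕ) → crandom χ (e x) (e y) = c x y)) := by
  constructor
  · -- part (a)
    intro A c hcsym hanc
    refine ⟨fun x m => Gdef χ hχ A c m (fun i => x.1 i) (x.1 m), ?_, ?_⟩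
    case refine_1 =>
      have hlow : ∀ x y : A, (x : ℕ → ℕ) ≠ (y : ℕ → ℕ) →
          ∀ m < (fun n => n) (Delta (x : ℕ → ℕ) (y : ℕ → ℕ)),
          Gdef χ hχ A c m (fun i => x.1 i) (x.1 m)
            = Gdef χ hχ A c m (fun i => y.1 i) (y.1 m) :=
        fun x y hxy m hm => G_agree χ hχ A c hm
      have hne : ∀ x y : A, (x : ℕ → ℕ) ≠ (y : ℕ → ℕ) →
          Gdef χ hχ A c (Delta (x : ℕ → ℕ) (y : ℕ → ℕ)) (fun i => x.1 i)
              (x.1 (Delta (x : ℕ → ℕ) (y : ℕ → ℕ)))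
            ≠ Gdef χ hχ A c (Delta (x : ℕ → ℕ) (y : ℕ → ℕ)) (fun i => y.1 i)
              (y.1 (Delta (x : ℕ → ℕ) (y : ℕ → ℕ))) :=
        fun x y hxy => G_ne χ hχ A c hxy
      exact embed_of_delta A _ (fun n => n) strictMono_id
        (continuous_pi fun m => cont_coord A m (Gdef χ hχ A c m)) hlow hne
    case refine_2 =>
      intro x y hxy
      have hD : Delta (fun m => Gdef χ hχ A c m (fun i => x.1 i) (x.1 m))
          (fun m => Gdef χ hχ A c m (fun i => y.1 i) (y.1 m)) = Delta (x : ℕ → ℕ) y :=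
        delta_eq (fun m hm => G_agree χ hχ A c hm) (G_ne χ hχ A c hxy)
      refine ⟨?_, hD⟩
      show χ _ _ = _
      rw [hD]
      exact G_chi χ hχsym hχ A c hcsym hanc x.2 y.2 hxy
  · -- part (b)
    intro A c hA hcsym hanc
    haveI : CompactSpace A := isCompact_iff_compactSpace.1 hA
    have hbound : ∀ k : ℕ, ∃ Mk : ℕ, ∀ x : A,
        Gdef χ hχ A c k (fun i => x.1 i) (x.1 k) ≤ Mk := by
      intro k
      have hc : IsCompact (Set.range fun x : A =>
          Gdef χ hχ A c k (fun i => x.1 i) (x.1 k)) :=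
        isCompact_range (cont_coord A k (Gdef χ hχ A c k))
      have hfin : (Set.range fun x : A =>
          Gdef χ hχ A c k (fun i => x.1 i) (x.1 k)).Finite := hc.finite ⟨by infer_instance⟩
      obtain ⟨M, hM⟩ := hfin.bddAbove
      exact ⟨M, fun x => hM (Set.mem_range_self x)⟩
    choose M hM using hbound
    set L : ℕ → ℕ := fun k => Nat.rec (M 0) (fun k ih => max (ih + 1) (M (k + 1))) k with hLdef
    have hLs : ∀ k, L (k + 1) = max (L k + 1) (M (k + 1)) := fun k => rfl
    have hLmono : StrictMono L := strictMono_nat_of_lt_succ fun k => by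
      rw [hLs]; exact lt_of_lt_of_le (Nat.lt_succ_self _) (le_max_left _ _)
    have hML : ∀ k, M k ≤ L k := by
      intro k
      cases k with
      | zero => exact le_rfl
      | succ k => rw [hLs]; exact le_max_right _ _
    have hlow : ∀ x y : A, (x : ℕ → ℕ) ≠ (y : ℕ → ℕ) →
        ∀ m < L (Delta (x : ℕ → ℕ) (y : ℕ → ℕ)),
        PAD (Gdef χ hχ A c) L x.1 m = PAD (Gdef χ hχ A c) L y.1 m := by
      intro x y hxy m hm
      by_cases h : ∃ k, L k = m
      · have hkΔ : h.choose < Delta (x : ℕ → ℕ) (y : ℕ → ℕ) := by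
          have h2 : L h.choose < L (Delta (x : ℕ → ℕ) (y : ℕ → ℕ)) := by
            rw [h.choose_spec]; exact hm
          exact hLmono.lt_iff_lt.1 h2
        simp only [PAD, dif_pos h]
        exact G_agree χ hχ A c hkΔ
      · simp only [PAD, dif_neg h]
    have hneq : ∀ x y : A, (x : ℕ → ℕ) ≠ (y : ℕ → ℕ) →
        PAD (Gdef χ hχ A c) L x.1 (L (Delta (x : ℕ → ℕ) (y : ℕ → ℕ)))
          ≠ PAD (Gdef χ hχ A c) L y.1 (L (Delta (x : ℕ → ℕ) (y : ℕ → ℕ))) := by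
      intro x y hxy
      rw [PAD_L hLmono.injective, PAD_L hLmono.injective]
      exact G_ne χ hχ A c hxy
    refine ⟨fun x => PAD (Gdef χ hχ A c) L x.1, ?_, ?_, ?_⟩
    · refine embed_of_delta A _ L hLmono ?_ hlow hneq
      apply continuous_pi
      intro m
      by_cases h : ∃ k, L k = m
      · have he : (fun x : A => PAD (Gdef χ hχ A c) L x.1 m) =
            fun x : A => Gdef χ hχ A c h.choose (fun i => x.1 i) (x.1 h.choose) := by
          funext x; simp only [PAD, dif_pos h]
        rw [he]
        exact cont_coord A h.choose _
      · have he : (fun x : A => PAD (Gdef χ hχ A c) L x.1 m) = fun _ => 0 := by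
          funext x; simp only [PAD, dif_neg h]
        rw [he]
        exact continuous_const
    · intro x m
      by_cases h : ∃ k, L k = m
      · simp only [PAD, dif_pos h]
        calc Gdef χ hχ A c h.choose (fun i => x.1 i) (x.1 h.choose)
            ≤ M h.choose := hM h.choose x
          _ ≤ L h.choose := hML _
          _ = m := h.choose_spec
      · simp only [PAD, dif_neg h]
        exact Nat.zero_le m
    · intro x y hxy
      have hD : Delta (PAD (Gdef χ hχ A c) L x.1) (PAD (Gdef χ hχ A c) L y.1)
          = L (Delta (x : ℕ → ℕ) y) :=
        delta_eq (hlow x y hxy) (hneq x y hxy)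
      show χ (PAD (Gdef χ hχ A c) L x.1
            (Delta (PAD (Gdef χ hχ A c) L x.1) (PAD (Gdef χ hχ A c) L y.1)))
          (PAD (Gdef χ hχ A c) L y.1
            (Delta (PAD (Gdef χ hχ A c) L x.1) (PAD (Gdef χ hχ A c) L y.1))) = c x.1 y.1
      rw [hD, PAD_L hLmono.injective, PAD_L hLmono.injective]
      exact G_chi χ hχsym hχ A c hcsym hanc x.2 y.2 hxy
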